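/- arXiv:1712.03494 — 2 statements merged into one kernel-verified Lean document; each statement's English description precedes it below -/
import Mathlib

section
/- Let $v_1,\dots,v_k \in \mathbb{R}^{2n}$ and let $z \in W^{1,2}([0,1],\mathbb{R}^{2n})$ satisfy $\dot z(t) \in \mathrm{conv}\{v_1,\dots,v_k\}$ for almost every $t$. Then for every $\varepsilon > 0$ there exists a piecewise affine function $\zeta:[0,1]\to\mathbb{R}^{2n}$ with $\|z-\zeta\|_{1,2} < \varepsilon$, $\zeta(0)=z(0)$, $\zeta(1)=z(1)$, and $\dot\zeta(t) \in \mathrm{conv}\{v_1,\dots,v_k\}$ for almost every $t$. -/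
open MeasureTheory Set
open scoped RealInnerProductSpace BigOperators

noncomputable def stdJ {n : ℕ} (x : EuclideanSpace ℝ (Fin (2*n))) : EuclideanSpace ℝ (Fin (2*n)) :=
  WithLp.toLp 2 (fun i : Fin (2*n) => if h : (i : ℕ) < n then -x ⟨(i:ℕ) + n, by omega⟩ else x ⟨(i:ℕ) - n, by omega⟩)

/-- The standard symplectic form `ω(u,v) = ⟨Ju, v⟩` on `ℝ^{2n}`. -/
noncomputable def omegaF {n : ℕ} (u v : EuclideanSpace ℝ (Fin (2*n))) : ℝ :=
  ⟪stdJ u, v⟫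

set_option linter.unusedSectionVars false

noncomputable def pcIdx (m : ℕ) (t : ℝ) : ℕ := min ⌊t * m⌋₊ (m - 1)

variable {E : Type*} [NormedAddCommGroup E] [NormedSpace ℝ E] [CompleteSpace E]
  [MeasurableSpace E] [BorelSpace E] [SecondCountableTopology E]

noncomputable def pcApprox (f : ℝ → E) (m : ℕ) (t : ℝ) : E :=
  (m : ℝ) • ∫ s in ((pcIdx m t : ℝ) / m)..(((pcIdx m t : ℝ) + 1) / m), f s

lemma pcIdx_lt {m : ℕ} (hm : 0 < m) (t : ℝ) : pcIdx m t < m := by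
  unfold pcIdx; omega

lemma pcIdx_eq_of_mem {m : ℕ} (hm : 0 < m) {i : ℕ} (hi : i < m) {t : ℝ}
    (ht : t ∈ Set.Ioo ((i : ℝ) / m) (((i : ℝ) + 1) / m)) : pcIdx m t = i := by
  have hm' : (0:ℝ) < m := by exact_mod_cast hm
  have h1 : (i : ℝ) < t * m := (div_lt_iff₀ hm').mp ht.1
  have h2 : t * m < (i : ℝ) + 1 := (lt_div_iff₀ hm').mp ht.2
  have h0 : (0:ℝ) ≤ t * m := le_trans (by positivity) h1.le
  have hfl : ⌊t * m⌋₊ = i := by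
    rw [Nat.floor_eq_iff h0]
    exact ⟨h1.le, by exact_mod_cast h2⟩
  rw [pcIdx, hfl]; omega

lemma pcApprox_eq_of_mem {m : ℕ} (hm : 0 < m) {i : ℕ} (hi : i < m) {t : ℝ}
    (ht : t ∈ Set.Ioo ((i : ℝ) / m) (((i : ℝ) + 1) / m)) (f : ℝ → E) :
    pcApprox f m t = (m : ℝ) • ∫ s in ((i : ℝ) / m)..(((i : ℝ) + 1) / m), f s := by
  rw [pcApprox, pcIdx_eq_of_mem hm hi ht]

lemma measurable_pcApprox (f : ℝ → E) (m : ℕ) : Measurable (pcApprox f m) := by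
  have h1 : Measurable (pcIdx m) := by
    exact (Nat.measurable_floor.comp (measurable_id.mul_const _)).min measurable_const
  exact (measurable_from_nat
    (f := fun j : ℕ => (m : ℝ) • ∫ s in ((j : ℝ) / m)..(((j : ℝ) + 1) / m), f s)).comp h1

lemma ae_exists_piece {m : ℕ} (hm : 0 < m) :
    ∀ᵐ t ∂(volume.restrict (Set.Icc (0:ℝ) 1)),
      ∃ i, i < m ∧ t ∈ Set.Ioo ((i : ℝ) / m) (((i : ℝ) + 1) / m) := by
  have hm' : (0:ℝ) < m := by exact_mod_cast hm
  have hnull : (volume : Measure ℝ)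
      (↑((Finset.range (m+1)).image (fun j : ℕ => (j : ℝ) / m))) = 0 :=
    Set.Finite.measure_zero (Finset.finite_toSet _) _
  have h2 : ∀ᵐ t ∂(volume.restrict (Set.Icc (0:ℝ) 1)),
      t ∉ (↑((Finset.range (m+1)).image (fun j : ℕ => (j : ℝ) / m)) : Set ℝ) :=
    ae_restrict_of_ae (by rw [MeasureTheory.ae_iff]; simpa only [not_not, Set.setOf_mem_eq] using hnull)
  filter_upwards [h2, ae_restrict_mem measurableSet_Icc] with t htn htm
  have hne : ∀ j : ℕ, j ≤ m → t ≠ (j : ℝ) / m := by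
    intro j hj h
    exact htn (by simp only [Finset.coe_image, Set.mem_image, Finset.mem_coe,
      Finset.mem_range]; exact ⟨j, by omega, h.symm⟩)
  have ht0 : t ≠ 0 := by
    have := hne 0 (by omega); simpa using this
  have htpos : 0 < t := lt_of_le_of_ne htm.1 (Ne.symm ht0)
  have h0 : (0:ℝ) ≤ t * m := by positivity
  set i := ⌊t * m⌋₊ with hi
  have hle : (i : ℝ) ≤ t * m := Nat.floor_le h0
  have hub : t * m ≤ m := by
    have := htm.2
    nlinarith
  have hlt : (i : ℝ) < t * m := by
    refine lt_of_le_of_ne hle fun h => ?_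
    have ht : t = (i : ℝ) / m := by field_simp; linarith
    have him' : (i : ℝ) ≤ m := h.le.trans hub
    exact hne i (Nat.cast_le.mp (by exact_mod_cast him')) ht
  have hlt2 : t * m < (i : ℝ) + 1 := by
    have := Nat.lt_floor_add_one (t * m); exact_mod_cast this
  have him : i < m := by
    have : (i : ℝ) < m := lt_of_lt_of_le hlt hub
    exact_mod_cast this
  exact ⟨i, him, (div_lt_iff₀ hm').mpr (by linarith), (lt_div_iff₀ hm').mpr (by linarith)⟩

lemma pcApprox_ae_eq_piece (f : ℝ → E) {m : ℕ} (hm : 0 < m) {i : ℕ} (hi : i < m) :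
    ∀ᵐ s ∂(volume : Measure ℝ), s ∈ Set.uIoc ((i : ℝ) / m) (((i : ℝ) + 1) / m) →
      pcApprox f m s = (m : ℝ) • ∫ u in ((i : ℝ) / m)..(((i : ℝ) + 1) / m), f u := by
  have hm' : (0:ℝ) < m := by exact_mod_cast hm
  have hle : (i : ℝ) / m ≤ ((i : ℝ) + 1) / m := by
    gcongr
    · linarith
  rw [Set.uIoc_of_le hle]
  filter_upwards [compl_mem_ae_iff.mpr (measure_singleton (((i : ℝ) + 1) / m))] with s hs hmem
  have hs' : s ∈ Set.Ioo ((i : ℝ) / m) (((i : ℝ) + 1) / m) :=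
    ⟨hmem.1, lt_of_le_of_ne hmem.2 (by simpa using hs)⟩
  exact pcApprox_eq_of_mem hm hi hs' f

lemma integrableOn_pcApprox (f : ℝ → E) {m : ℕ} (hm : 0 < m) :
    IntegrableOn (pcApprox f m) (Set.Icc (0:ℝ) 1) := by
  obtain ⟨B, hB⟩ : ∃ B, ∀ t, ‖pcApprox f m t‖ ≤ B := by
    refine ⟨(Finset.range m).sup' ⟨0, Finset.mem_range.mpr hm⟩
      (fun j : ℕ => ‖(m : ℝ) • ∫ s in ((j : ℝ) / m)..(((j : ℝ) + 1) / m), f s‖), fun t => ?_⟩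
    have h := Finset.le_sup'
      (f := fun j : ℕ => ‖(m : ℝ) • ∫ s in ((j : ℝ) / m)..(((j : ℝ) + 1) / m), f s‖)
      (Finset.mem_range.mpr (pcIdx_lt hm t))
    simpa [pcApprox] using h
  exact Integrable.mono' (integrableOn_const (by simp))
    ((measurable_pcApprox f m).aestronglyMeasurable)
    (Filter.Eventually.of_forall hB)

lemma integral_pcApprox_piece (f : ℝ → E) {m : ℕ} (hm : 0 < m) {i : ℕ} (hi : i < m) :
    ∫ s in ((i : ℝ) / m)..(((i : ℝ) + 1) / m), pcApprox f m s
      = ∫ s in ((i : ℝ) / m)..(((i : ℝ) + 1) / m), f s := by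
  have hm' : (0:ℝ) < m := by exact_mod_cast hm
  rw [intervalIntegral.integral_congr_ae (pcApprox_ae_eq_piece f hm hi),
    intervalIntegral.integral_const]
  have : ((i : ℝ) + 1) / m - (i : ℝ) / m = 1 / m := by field_simp; ring
  rw [this, smul_smul]
  rw [show (1 / (m:ℝ)) * m = 1 by field_simp, one_smul]

lemma intervalIntegrable_piece {f : ℝ → E} (hint : IntegrableOn f (Set.Icc (0:ℝ) 1)) {m : ℕ}
    (hm : 0 < m) {i : ℕ} (hi : i < m) :
    IntervalIntegrable f volume ((i : ℝ) / m) (((i : ℝ) + 1) / m) := by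
  have hm' : (0:ℝ) < m := by exact_mod_cast hm
  have hle : (i : ℝ) / m ≤ ((i : ℝ) + 1) / m := by gcongr; linarith
  rw [intervalIntegrable_iff_integrableOn_Ioc_of_le hle]
  apply hint.mono_set
  intro x hx
  refine ⟨le_trans (by positivity) hx.1.le, hx.2.trans ?_⟩
  rw [div_le_one hm']
  exact_mod_cast hi

lemma integral_eq_sum_pieces (f : ℝ → E) {m : ℕ} (hm : 0 < m)
    (hpieces : ∀ i < m, IntervalIntegrable f volume ((i : ℝ) / m) (((i : ℝ) + 1) / m)) :
    ∫ t in (0:ℝ)..1, f t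
      = ∑ i ∈ Finset.range m, ∫ s in ((i : ℝ) / m)..(((i : ℝ) + 1) / m), f s := by
  have hm' : (0:ℝ) < m := by exact_mod_cast hm
  have hint' : ∀ k < m, IntervalIntegrable f volume
      ((fun j : ℕ => (j : ℝ) / m) k) ((fun j : ℕ => (j : ℝ) / m) (k + 1)) := by
    intro k hk
    have h2 := hpieces k hk
    convert h2 using 2
    push_cast
    ring
  have h := intervalIntegral.sum_integral_adjacent_intervals hint'
  have e0 : ((0 : ℕ) : ℝ) / m = 0 := by simp
  have e1 : ((m : ℕ) : ℝ) / m = 1 := by field_simp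
  simp only [e0, e1] at h
  rw [← h]
  refine Finset.sum_congr rfl fun i _ => ?_
  have e2 : ((i + 1 : ℕ) : ℝ) / m = ((i : ℝ) + 1) / m := by push_cast; ring
  rw [e2]

lemma integral_pcApprox (f : ℝ → E) (hint : IntegrableOn f (Set.Icc (0:ℝ) 1)) {m : ℕ}
    (hm : 0 < m) :
    ∫ t in (0:ℝ)..1, pcApprox f m t = ∫ t in (0:ℝ)..1, f t := by
  rw [integral_eq_sum_pieces (pcApprox f m) hm
      (fun i hi => intervalIntegrable_piece (integrableOn_pcApprox f hm) hm hi),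
    integral_eq_sum_pieces f hm (fun i hi => intervalIntegrable_piece hint hm hi)]
  exact Finset.sum_congr rfl fun i hi => integral_pcApprox_piece f hm (Finset.mem_range.mp hi)

lemma iiOn {F : Type*} [NormedAddCommGroup F] {h : ℝ → F}
    (hh : IntegrableOn h (Set.Icc (0:ℝ) 1)) : IntervalIntegrable h volume 0 1 := by
  rw [intervalIntegrable_iff_integrableOn_Ioc_of_le zero_le_one]
  exact hh.mono_set Set.Ioc_subset_Icc_self

lemma normIntOn {F : Type*} [NormedAddCommGroup F] (u w : ℝ → F)
    (hu : IntegrableOn u (Set.Icc (0:ℝ) 1)) (hw : IntegrableOn w (Set.Icc (0:ℝ) 1)) :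
    IntegrableOn (fun t => ‖u t - w t‖) (Set.Icc (0:ℝ) 1) := (hu.sub hw).norm

lemma key_approx (f : ℝ → E) (hint : IntegrableOn f (Set.Icc (0:ℝ) 1)) {δ : ℝ} (hδ : 0 < δ) :
    ∃ m, 0 < m ∧ ∫ t in (0:ℝ)..1, ‖f t - pcApprox f m t‖ < δ := by
  classical
  set fI := (Set.Icc (0:ℝ) 1).indicator f with hfIdef
  have hfI : Integrable fI volume := hint.integrable_indicator measurableSet_Icc
  obtain ⟨g, gsupp, hgclose, gcont, gint⟩ :=
    hfI.exists_hasCompactSupport_integral_sub_le (show (0:ℝ) < δ/8 by linarith)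
  have hUC : UniformContinuous g := gsupp.uniformContinuous_of_continuous gcont
  obtain ⟨η, hη, hgη⟩ := Metric.uniformContinuous_iff.mp hUC (δ/8) (by linarith)
  obtain ⟨m₀, hm₀⟩ := exists_nat_one_div_lt hη
  set m := m₀ + 1 with hmdef
  have hm : 0 < m := Nat.succ_pos _
  have hm' : (0:ℝ) < m := by exact_mod_cast hm
  have hmη : 1 / (m:ℝ) < η := by exact_mod_cast hm₀
  refine ⟨m, hm, ?_⟩
  -- basic integrability facts
  have gOn : IntegrableOn g (Set.Icc (0:ℝ) 1) := gint.integrableOn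
  have pfOn : IntegrableOn (pcApprox f m) (Set.Icc (0:ℝ) 1) := integrableOn_pcApprox f hm
  have pgOn : IntegrableOn (pcApprox g m) (Set.Icc (0:ℝ) 1) := integrableOn_pcApprox g hm
  -- T1 : ∫ ‖f - g‖ ≤ δ/8
  have hfg_int : IntegrableOn (fun t => ‖f t - g t‖) (Set.Icc (0:ℝ) 1) := normIntOn f g hint gOn
  have hT1 : ∫ t in (0:ℝ)..1, ‖f t - g t‖ ≤ δ/8 := by
    rw [intervalIntegral.integral_of_le zero_le_one]
    have e1 : ∫ t in Set.Ioc (0:ℝ) 1, ‖f t - g t‖ = ∫ t in Set.Ioc (0:ℝ) 1, ‖fI t - g t‖ :=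
      setIntegral_congr_fun measurableSet_Ioc (fun t ht => by
        rw [hfIdef, Set.indicator_of_mem (Set.Ioc_subset_Icc_self ht)])
    rw [e1]
    exact le_trans (setIntegral_le_integral ((hfI.sub gint).norm)
      (Filter.Eventually.of_forall fun x => norm_nonneg _)) hgclose
  -- T2 : ∫ ‖g - pcApprox g m‖ ≤ δ/8  via pointwise a.e. bound
  have hae : ∀ᵐ t ∂(volume.restrict (Set.Icc (0:ℝ) 1)), ‖g t - pcApprox g m t‖ ≤ δ/8 := by
    filter_upwards [ae_exists_piece hm] with t ht
    obtain ⟨i, hi, hti⟩ := ht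
    rw [pcApprox_eq_of_mem hm hi hti g]
    have hle : (i:ℝ)/m ≤ ((i:ℝ)+1)/m := by gcongr; linarith
    have hdiff : ((i:ℝ)+1)/m - (i:ℝ)/m = 1/m := by field_simp; ring
    have hconstint : IntervalIntegrable (fun _ : ℝ => g t) volume ((i:ℝ)/m) (((i:ℝ)+1)/m) :=
      intervalIntegrable_const
    have hgii : IntervalIntegrable g volume ((i:ℝ)/m) (((i:ℝ)+1)/m) :=
      gcont.intervalIntegrable _ _
    have hconst : g t = (m:ℝ) • ∫ _ in ((i:ℝ)/m)..(((i:ℝ)+1)/m), g t := by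
      rw [intervalIntegral.integral_const, hdiff, smul_smul,
        show (m:ℝ) * (1/m) = 1 by field_simp, one_smul]
    calc ‖g t - (m:ℝ) • ∫ s in ((i:ℝ)/m)..(((i:ℝ)+1)/m), g s‖
        = ‖(m:ℝ) • ∫ s in ((i:ℝ)/m)..(((i:ℝ)+1)/m), (g t - g s)‖ := by
          rw [intervalIntegral.integral_sub hconstint hgii, smul_sub, ← hconst]
      _ = (m:ℝ) * ‖∫ s in ((i:ℝ)/m)..(((i:ℝ)+1)/m), (g t - g s)‖ := by
          rw [norm_smul, Real.norm_of_nonneg hm'.le]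
      _ ≤ (m:ℝ) * ((δ/8) * |((i:ℝ)+1)/m - (i:ℝ)/m|) := by
          gcongr
          apply intervalIntegral.norm_integral_le_of_norm_le_const
          intro s hs
          rw [Set.uIoc_of_le hle] at hs
          have hd : dist t s < η := by
            rw [Real.dist_eq, abs_sub_lt_iff]
            constructor
            · have := hs.1; have := hti.2; linarith [hmη, hdiff]
            · have := hs.2; have := hti.1; linarith [hmη, hdiff]
          exact le_of_lt (by simpa [dist_eq_norm] using hgη hd)
      _ = δ/8 := by
          rw [hdiff, abs_of_nonneg (by positivity : (0:ℝ) ≤ 1/(m:ℝ))]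
          field_simp
  have hT2 : ∫ t in (0:ℝ)..1, ‖g t - pcApprox g m t‖ ≤ δ/8 := by
    have := intervalIntegral.integral_mono_ae_restrict (f := fun t => ‖g t - pcApprox g m t‖)
      (g := fun _ => δ/8) (μ := volume) zero_le_one
      (iiOn (normIntOn g (pcApprox g m) gOn pgOn)) intervalIntegrable_const hae
    simpa using this
  -- T3 : ∫ ‖pcApprox g m - pcApprox f m‖ ≤ ∫ ‖f - g‖
  have hT3 : ∫ t in (0:ℝ)..1, ‖pcApprox g m t - pcApprox f m t‖
      ≤ ∫ t in (0:ℝ)..1, ‖f t - g t‖ := by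
    rw [integral_eq_sum_pieces (fun t => ‖pcApprox g m t - pcApprox f m t‖) hm
        (fun i hi => intervalIntegrable_piece (normIntOn (pcApprox g m) (pcApprox f m) pgOn pfOn) hm hi),
      integral_eq_sum_pieces (fun t => ‖f t - g t‖) hm
        (fun i hi => intervalIntegrable_piece hfg_int hm hi)]
    refine Finset.sum_le_sum fun i hi => ?_
    have hi' : i < m := Finset.mem_range.mp hi
    have hle : (i:ℝ)/m ≤ ((i:ℝ)+1)/m := by gcongr; linarith
    have hdiff : ((i:ℝ)+1)/m - (i:ℝ)/m = 1/m := by field_simp; ring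
    set wg : E := (m:ℝ) • ∫ u in ((i:ℝ)/m)..(((i:ℝ)+1)/m), g u with hwg
    set wf : E := (m:ℝ) • ∫ u in ((i:ℝ)/m)..(((i:ℝ)+1)/m), f u with hwf
    have haeconst : ∀ᵐ s ∂(volume : Measure ℝ),
        s ∈ Set.uIoc ((i:ℝ)/m) (((i:ℝ)+1)/m) →
          ‖pcApprox g m s - pcApprox f m s‖ = ‖wg - wf‖ := by
      filter_upwards [pcApprox_ae_eq_piece g hm hi', pcApprox_ae_eq_piece f hm hi']
        with s h1 h2 hmem
      rw [h1 hmem, h2 hmem]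
    have e1 : ∫ s in ((i:ℝ)/m)..(((i:ℝ)+1)/m), ‖pcApprox g m s - pcApprox f m s‖
        = (1/m) * ‖wg - wf‖ := by
      rw [intervalIntegral.integral_congr_ae haeconst, intervalIntegral.integral_const,
        hdiff, smul_eq_mul]
    rw [e1]
    have hgii : IntervalIntegrable g volume ((i:ℝ)/m) (((i:ℝ)+1)/m) :=
      gcont.intervalIntegrable _ _
    have hfii : IntervalIntegrable f volume ((i:ℝ)/m) (((i:ℝ)+1)/m) :=
      intervalIntegrable_piece hint hm hi'
    have e2 : wg - wf = (m:ℝ) • ∫ u in ((i:ℝ)/m)..(((i:ℝ)+1)/m), (g u - f u) := by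
      rw [intervalIntegral.integral_sub hgii hfii, smul_sub]
    calc (1/(m:ℝ)) * ‖wg - wf‖
        = ‖∫ u in ((i:ℝ)/m)..(((i:ℝ)+1)/m), (g u - f u)‖ := by
          rw [e2, norm_smul, Real.norm_of_nonneg hm'.le]
          field_simp
      _ ≤ ∫ u in ((i:ℝ)/m)..(((i:ℝ)+1)/m), ‖g u - f u‖ :=
          intervalIntegral.norm_integral_le_integral_norm hle
      _ = ∫ u in ((i:ℝ)/m)..(((i:ℝ)+1)/m), ‖f u - g u‖ := by
          simp_rw [norm_sub_rev]
  -- combine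
  have hsplit : ∫ t in (0:ℝ)..1, ‖f t - pcApprox f m t‖
      ≤ ∫ t in (0:ℝ)..1, (‖f t - g t‖ + (‖g t - pcApprox g m t‖
          + ‖pcApprox g m t - pcApprox f m t‖)) := by
    apply intervalIntegral.integral_mono_on zero_le_one
      (iiOn (normIntOn f (pcApprox f m) hint pfOn))
      ((iiOn hfg_int).add ((iiOn (normIntOn g (pcApprox g m) gOn pgOn)).add
        (iiOn (normIntOn (pcApprox g m) (pcApprox f m) pgOn pfOn))))
    intro x _
    calc ‖f x - pcApprox f m x‖
        ≤ ‖f x - g x‖ + ‖g x - pcApprox f m x‖ := norm_sub_le_norm_sub_add_norm_sub _ _ _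
      _ ≤ ‖f x - g x‖ + (‖g x - pcApprox g m x‖ + ‖pcApprox g m x - pcApprox f m x‖) := by
          gcongr
          exact norm_sub_le_norm_sub_add_norm_sub _ _ _
  have hadd : ∫ t in (0:ℝ)..1, (‖f t - g t‖ + (‖g t - pcApprox g m t‖
      + ‖pcApprox g m t - pcApprox f m t‖))
      = (∫ t in (0:ℝ)..1, ‖f t - g t‖) + ((∫ t in (0:ℝ)..1, ‖g t - pcApprox g m t‖)
        + ∫ t in (0:ℝ)..1, ‖pcApprox g m t - pcApprox f m t‖) := by
    rw [intervalIntegral.integral_add (iiOn hfg_int)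
      ((iiOn (normIntOn g (pcApprox g m) gOn pgOn)).add (iiOn (normIntOn (pcApprox g m) (pcApprox f m) pgOn pfOn))),
      intervalIntegral.integral_add (iiOn (normIntOn g (pcApprox g m) gOn pgOn))
      (iiOn (normIntOn (pcApprox g m) (pcApprox f m) pgOn pfOn))]
  rw [hadd] at hsplit
  linarith


/-- Lemma 3.1: a `W^{1,2}` curve with a.e. velocities in `conv{v_1,…,v_k}` can be approximated
in the `W^{1,2}` norm by a piecewise affine curve with the same endpoints and velocities in
`conv{v_1,…,v_k}`. -/
theorem stmt1 (n k : ℕ) (v : Fin k → EuclideanSpace ℝ (Fin (2*n)))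
    (z zdot : ℝ → EuclideanSpace ℝ (Fin (2*n)))
    (hint : IntegrableOn zdot (Set.Icc 0 1))
    (hz : ∀ t ∈ Set.Icc (0:ℝ) 1, z t = z 0 + ∫ s in (0:ℝ)..t, zdot s)
    (hconv : ∀ᵐ t ∂(volume.restrict (Set.Icc (0:ℝ) 1)),
      zdot t ∈ convexHull ℝ (Set.range v))
    (ε : ℝ) (hε : 0 < ε) :
    ∃ (ζ ζdot : ℝ → EuclideanSpace ℝ (Fin (2*n))) (m : ℕ) (τ : Fin (m+1) → ℝ)
      (wv : Fin m → EuclideanSpace ℝ (Fin (2*n))),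
      Monotone τ ∧ τ 0 = 0 ∧ τ (Fin.last m) = 1 ∧
      (∀ i : Fin m, ∀ t ∈ Set.Ioo (τ i.castSucc) (τ i.succ), ζdot t = wv i) ∧
      (∀ i : Fin m, wv i ∈ convexHull ℝ (Set.range v)) ∧
      (∀ t ∈ Set.Icc (0:ℝ) 1, ζ t = ζ 0 + ∫ s in (0:ℝ)..t, ζdot s) ∧
      ζ 0 = z 0 ∧ ζ 1 = z 1 ∧
      Real.sqrt (∫ t in (0:ℝ)..1, (‖z t - ζ t‖^2 + ‖zdot t - ζdot t‖^2)) < ε := by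
  classical
  set C := convexHull ℝ (Set.range v) with hCdef
  have hCconv : Convex ℝ C := convex_convexHull ℝ _
  have hCclosed : IsClosed C := (Set.finite_range v).isClosed_convexHull ℝ
  obtain ⟨M, hM0, hM⟩ : ∃ M, 0 ≤ M ∧ ∀ x ∈ C, ‖x‖ ≤ M := by
    obtain ⟨R, hR⟩ := (isBounded_iff_forall_norm_le).mp
      ((Set.finite_range v).isCompact_convexHull ℝ).isBounded
    exact ⟨max R 0, le_max_right _ _, fun x hx => (hR x hx).trans (le_max_left _ _)⟩
  set δ := min 1 (ε^2/(2*M+2)) with hδdef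
  have hδ : 0 < δ := lt_min one_pos (by positivity)
  obtain ⟨m, hm, hD⟩ := key_approx zdot hint hδ
  have hm' : (0:ℝ) < m := by exact_mod_cast hm
  set pcf := pcApprox zdot m with hpcfdef
  have pfOn : IntegrableOn pcf (Set.Icc (0:ℝ) 1) := integrableOn_pcApprox zdot hm
  set ζ : ℝ → EuclideanSpace ℝ (Fin (2*n)) := fun t => z 0 + ∫ s in (0:ℝ)..t, pcf s with hζdef
  -- wv membership
  have hwv : ∀ i : ℕ, i < m →
      (m:ℝ) • ∫ s in ((i:ℝ)/m)..(((i:ℝ)+1)/m), zdot s ∈ C := by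
    intro i hi
    have hle : (i:ℝ)/m ≤ ((i:ℝ)+1)/m := by gcongr; linarith
    have hsub : Set.Ioc ((i:ℝ)/m) (((i:ℝ)+1)/m) ⊆ Set.Icc (0:ℝ) 1 := by
      intro x hx
      refine ⟨le_trans (by positivity) hx.1.le, hx.2.trans ?_⟩
      rw [div_le_one hm']
      exact_mod_cast hi
    have hdiff : ((i:ℝ)+1)/m - (i:ℝ)/m = 1/m := by field_simp; ring
    have h0 : volume (Set.Ioc ((i:ℝ)/m) (((i:ℝ)+1)/m)) ≠ 0 := by
      rw [Real.volume_Ioc, hdiff]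
      simp only [ne_eq, ENNReal.ofReal_eq_zero, not_le]
      positivity
    have hT : volume (Set.Ioc ((i:ℝ)/m) (((i:ℝ)+1)/m)) ≠ ⊤ := by
      rw [Real.volume_Ioc]; exact ENNReal.ofReal_ne_top
    have hmem : ∀ᵐ x ∂(volume.restrict (Set.Ioc ((i:ℝ)/m) (((i:ℝ)+1)/m))), zdot x ∈ C :=
      ae_restrict_of_ae_restrict_of_subset hsub hconv
    have havg := hCconv.set_average_mem hCclosed h0 hT hmem (hint.mono_set hsub)
    rwa [setAverage_eq, measureReal_def, Real.volume_Ioc, hdiff, ENNReal.toReal_ofReal (by positivity),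
      show ((1:ℝ)/m)⁻¹ = (m:ℝ) by field_simp,
      ← intervalIntegral.integral_of_le hle] at havg
  -- integrability of zdot and pcf from 0 to t
  have hii : ∀ (u : ℝ → EuclideanSpace ℝ (Fin (2*n))), IntegrableOn u (Set.Icc (0:ℝ) 1) →
      ∀ t ∈ Set.Icc (0:ℝ) 1, IntervalIntegrable u volume 0 t := by
    intro u hu t ht
    rw [intervalIntegrable_iff_integrableOn_Ioc_of_le ht.1]
    exact hu.mono_set (fun x hx => ⟨hx.1.le, hx.2.trans ht.2⟩)
  set D := ∫ t in (0:ℝ)..1, ‖zdot t - pcf t‖ with hDdef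
  have hD0 : 0 ≤ D := intervalIntegral.integral_nonneg zero_le_one (fun u _ => norm_nonneg _)
  have hzζ : ∀ t ∈ Set.Icc (0:ℝ) 1, ‖z t - ζ t‖ ≤ D := by
    intro t ht
    have e : z t - ζ t = ∫ s in (0:ℝ)..t, (zdot s - pcf s) := by
      rw [hz t ht, hζdef,
        intervalIntegral.integral_sub (hii zdot hint t ht) (hii pcf pfOn t ht)]
      simp only [add_sub_add_left_eq_sub]
    rw [e]
    calc ‖∫ s in (0:ℝ)..t, (zdot s - pcf s)‖
        ≤ ∫ s in (0:ℝ)..t, ‖zdot s - pcf s‖ :=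
          intervalIntegral.norm_integral_le_integral_norm ht.1
      _ ≤ D := by
          apply intervalIntegral.integral_mono_interval le_rfl ht.1 ht.2
          · exact Filter.Eventually.of_forall (fun s => norm_nonneg _)
          · exact iiOn (normIntOn zdot pcf hint pfOn)
  -- pcf everywhere in C, hence bounded by M
  have hpcfC : ∀ t, pcf t ∈ C := fun t => hwv (pcIdx m t) (pcIdx_lt hm t)
  -- a.e. bound on the integrand
  have hbound : ∀ᵐ t ∂(volume.restrict (Set.Icc (0:ℝ) 1)),
      ‖z t - ζ t‖^2 + ‖zdot t - pcf t‖^2 ≤ D^2 + (2*M)*‖zdot t - pcf t‖ := by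
    filter_upwards [hconv, ae_restrict_mem measurableSet_Icc] with t htC htm
    have h1 : ‖z t - ζ t‖ ≤ D := hzζ t htm
    have h2 : ‖zdot t - pcf t‖ ≤ 2*M := by
      calc ‖zdot t - pcf t‖ ≤ ‖zdot t‖ + ‖pcf t‖ := norm_sub_le _ _
        _ ≤ M + M := add_le_add (hM _ htC) (hM _ (hpcfC t))
        _ = 2*M := by ring
    nlinarith [norm_nonneg (z t - ζ t), norm_nonneg (zdot t - pcf t)]
  -- integrability of both sides
  have hRHSint : IntervalIntegrable (fun t => D^2 + (2*M)*‖zdot t - pcf t‖) volume 0 1 :=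
    intervalIntegrable_const.add ((iiOn (normIntOn zdot pcf hint pfOn)).const_mul (2*M))
  have hLHSint : IntervalIntegrable
      (fun t => ‖z t - ζ t‖^2 + ‖zdot t - pcf t‖^2) volume 0 1 := by
    have hInt1 : IntegrableOn (fun t => ‖z t - ζ t‖^2) (Set.Icc (0:ℝ) 1) volume := by
      have hcont : ContinuousOn (fun t => ‖(∫ s in (0:ℝ)..t, zdot s)
          - ∫ s in (0:ℝ)..t, pcf s‖^2) (Set.Icc (0:ℝ) 1) := by
        apply ContinuousOn.pow
        apply ContinuousOn.norm
        apply ContinuousOn.sub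
        · have := intervalIntegral.continuousOn_primitive_interval
            (a := (0:ℝ)) (b := (1:ℝ)) (μ := volume) (f := zdot) ?_
          · simpa using this
          · simpa using hint
        · have := intervalIntegral.continuousOn_primitive_interval
            (a := (0:ℝ)) (b := (1:ℝ)) (μ := volume) (f := pcf) ?_
          · simpa using this
          · simpa using pfOn
      have hIG : IntegrableOn (fun t => ‖(∫ s in (0:ℝ)..t, zdot s)
          - ∫ s in (0:ℝ)..t, pcf s‖^2) (Set.Icc (0:ℝ) 1) volume := hcont.integrableOn_Icc
      refine hIG.congr_fun (fun t ht => ?_) measurableSet_Icc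
      have e : z t - ζ t = (∫ s in (0:ℝ)..t, zdot s) - ∫ s in (0:ℝ)..t, pcf s := by
        rw [hz t ht, hζdef]; simp only [add_sub_add_left_eq_sub]
      simp [e]
    have hInt2 : IntegrableOn (fun t => ‖zdot t - pcf t‖^2) (Set.Icc (0:ℝ) 1) volume := by
      have hmeas : AEStronglyMeasurable (fun t => ‖zdot t - pcf t‖^2)
          (volume.restrict (Set.Icc (0:ℝ) 1)) := by
        have h1 : AEStronglyMeasurable (fun t => ‖zdot t - pcf t‖)
            (volume.restrict (Set.Icc (0:ℝ) 1)) :=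
          (hint.sub pfOn).aestronglyMeasurable.norm
        simpa [pow_two, Pi.mul_def] using h1.mul h1
      apply Integrable.mono' (g := fun _ => (2*M)^2)
        (integrableOn_const (by simp)) hmeas
      filter_upwards [hconv] with t htC
      have h2 : ‖zdot t - pcf t‖ ≤ 2*M := by
        calc ‖zdot t - pcf t‖ ≤ ‖zdot t‖ + ‖pcf t‖ := norm_sub_le _ _
          _ ≤ M + M := add_le_add (hM _ htC) (hM _ (hpcfC t))
          _ = 2*M := by ring
      rw [Real.norm_of_nonneg (by positivity)]
      nlinarith [norm_nonneg (zdot t - pcf t)]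
    exact iiOn (hInt1.add hInt2)
  -- the main integral bound
  have hX : ∫ t in (0:ℝ)..1, (‖z t - ζ t‖^2 + ‖zdot t - pcf t‖^2) ≤ D^2 + (2*M)*D := by
    have h1 := intervalIntegral.integral_mono_ae_restrict zero_le_one hLHSint hRHSint hbound
    have h2 : ∫ t in (0:ℝ)..1, (D^2 + (2*M)*‖zdot t - pcf t‖) = D^2 + (2*M)*D := by
      rw [intervalIntegral.integral_add intervalIntegrable_const
        ((iiOn (normIntOn zdot pcf hint pfOn)).const_mul (2*M)),
        intervalIntegral.integral_const_mul]
      simp [hDdef]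
    rw [h2] at h1
    exact h1
  -- assemble the witnesses
  refine ⟨ζ, pcf, m, fun j => (j:ℝ)/m,
    fun i => (m:ℝ) • ∫ s in ((i:ℝ)/m)..(((i:ℝ)+1)/m), zdot s,
    ?_, by simp, ?_, ?_, ?_, ?_, ?_, ?_, ?_⟩
  · intro a b hab
    have h : ((a:ℕ):ℝ) ≤ ((b:ℕ):ℝ) := by exact_mod_cast (hab : (a:ℕ) ≤ (b:ℕ))
    show ((a:ℕ):ℝ)/m ≤ ((b:ℕ):ℝ)/m
    gcongr
  · show ((Fin.last m : Fin (m+1)).val : ℝ)/m = 1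
    rw [Fin.val_last]
    exact div_self hm'.ne'
  · intro i t ht
    have hti : t ∈ Set.Ioo (((i:ℕ):ℝ)/m) ((((i:ℕ):ℝ)+1)/m) := by
      constructor
      · have h1 : ((i.castSucc : Fin (m+1)).val : ℝ)/m < t := ht.1
        rwa [Fin.coe_castSucc] at h1
      · have h2 : t < ((i.succ : Fin (m+1)).val : ℝ)/m := ht.2
        rw [Fin.val_succ] at h2
        push_cast at h2 ⊢
        exact h2
    exact pcApprox_eq_of_mem hm i.isLt hti zdot
  · intro i
    exact hwv i i.isLt
  · intro t _
    simp [hζdef]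
  · simp [hζdef]
  · rw [hζdef]
    simp only
    rw [integral_pcApprox zdot hint hm, ← hz 1 ⟨zero_le_one, le_refl 1⟩]
  · rw [Real.sqrt_lt' hε]
    have hδ2 : δ ≤ ε^2/(2*M+2) := min_le_right _ _
    have hδ1 : δ ≤ 1 := min_le_left _ _
    have h2M : (0:ℝ) < 2*M+2 := by linarith
    have key : D^2 + (2*M)*D < ε^2 := by
      have hδ3 : δ*(2*M+2) ≤ ε^2 := (le_div_iff₀ h2M).mp hδ2
      have e0 : D*D ≤ δ*δ := mul_le_mul hD.le hD.le hD0 (hD0.trans hD.le)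
      have e0' : δ*δ ≤ δ*1 := mul_le_mul_of_nonneg_left hδ1 hδ.le
      have e1 : D^2 ≤ δ*1 := by rw [pow_two]; exact e0.trans e0'
      have e2 : 2*M*D ≤ 2*M*δ := mul_le_mul_of_nonneg_left hD.le (by linarith)
      have e3 : δ*(2*M+1) < δ*(2*M+2) := by
        have := mul_lt_mul_of_pos_left (show (2*M+1:ℝ) < 2*M+2 by linarith) hδ
        linarith
      have e4 : δ*1 + 2*M*δ = δ*(2*M+1) := by ring
      linarith
    calc ∫ t in (0:ℝ)..1, (‖z t - ζ t‖^2 + ‖zdot t - pcf t‖^2) ≤ D^2 + (2*M)*D := hX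
      _ < ε^2 := key
end

section
/- Let $(\alpha_i, w_i)_{i=1}^{p}$ and $(\beta_i, n_i)_{i=1}^{q}$ be sequences of nonnegative reals and vectors in $\mathbb{R}^{2n}$ satisfying: $\sum_{i=1}^p \alpha_i w_i = 0$, $\sum_{i=1}^q \beta_i n_i = 0$, $\sum_{1\le j<i\le p} \alpha_i\alpha_j\omega(w_i,w_j) = 1$, $\sum_{1\le j<i\le q}\beta_i\beta_j\omega(n_i,n_j) = 1$, with $w_p = n$ and $n_1 = -n$ for some unit vector $n$, and $\alpha_p, \beta_1 > 0$. Set $c = \sqrt{\beta_1^2 + \alpha_p^2}$ and define the concatenated sequence of coefficients $(\delta_i) = (\frac{\beta_1}{c}\alpha_1, \dots, \frac{\beta_1}{c}\alpha_{p-1}, \frac{\alpha_p}{c}\beta_2, \dots, \frac{\alpha_p}{c}\beta_q)$ with corresponding vectors $(u_i) = (w_1,\dots,w_{p-1}, n_2,\dots,n_q)$. Then $\sum_i \delta_i u_i = 0$ and $\sum_{1 \le j < i \le p+q-2} \delta_i\delta_j\,\omega(u_i,u_j) = 1$. -/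
open MeasureTheory Set
open scoped RealInnerProductSpace BigOperators

noncomputable def stdJL {n : ℕ} :
    EuclideanSpace ℝ (Fin (2*n)) →ₗ[ℝ] EuclideanSpace ℝ (Fin (2*n)) where
  toFun := stdJ
  map_add' x y := by
    ext i
    simp only [stdJ, PiLp.add_apply, PiLp.toLp_apply]
    split <;> ring
  map_smul' a x := by
    ext i
    simp only [stdJ, PiLp.smul_apply, smul_eq_mul, RingHom.id_apply, PiLp.toLp_apply]
    split <;> ring

lemma omegaF_eq {n : ℕ} (x y : EuclideanSpace ℝ (Fin (2*n))) : omegaF x y = ⟪stdJL x, y⟫ := rfl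

lemma omegaF_sum_left {n : ℕ} {ι : Type*} (s : Finset ι) (f : ι → EuclideanSpace ℝ (Fin (2*n)))
    (y : EuclideanSpace ℝ (Fin (2*n))) :
    omegaF (∑ i ∈ s, f i) y = ∑ i ∈ s, omegaF (f i) y := by
  simp [omegaF_eq, map_sum, sum_inner]

lemma omegaF_sum_right {n : ℕ} {ι : Type*} (s : Finset ι) (x : EuclideanSpace ℝ (Fin (2*n)))
    (f : ι → EuclideanSpace ℝ (Fin (2*n))) :
    omegaF x (∑ i ∈ s, f i) = ∑ i ∈ s, omegaF x (f i) := by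
  simp [omegaF_eq, inner_sum]

lemma omegaF_smul_left {n : ℕ} (a : ℝ) (x y : EuclideanSpace ℝ (Fin (2*n))) :
    omegaF (a • x) y = a * omegaF x y := by
  rw [omegaF_eq, _root_.map_smul, omegaF_eq]
  exact real_inner_smul_left _ _ _

lemma omegaF_smul_right {n : ℕ} (a : ℝ) (x y : EuclideanSpace ℝ (Fin (2*n))) :
    omegaF x (a • y) = a * omegaF x y := by
  rw [omegaF_eq, omegaF_eq]
  exact real_inner_smul_right _ _ _

lemma omegaF_neg_right {n : ℕ} (x y : EuclideanSpace ℝ (Fin (2*n))) :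
    omegaF x (-y) = -omegaF x y := by
  rw [omegaF_eq, omegaF_eq, inner_neg_right]

lemma omegaF_self {n : ℕ} (x : EuclideanSpace ℝ (Fin (2*n))) : omegaF x x = 0 := by
  simp only [omegaF, PiLp.inner_apply, RCLike.inner_apply, conj_trivial]
  rw [Finset.sum_congr rfl (fun i _ => mul_comm _ _)]
  apply Finset.sum_ninvolution (f := fun i => stdJ x i * x i)
    (fun i => (⟨if (i:ℕ) < n then (i:ℕ) + n else (i:ℕ) - n, by split <;> omega⟩ : Fin (2*n)))
  · intro i
    rcases lt_or_ge (i:ℕ) n with h | h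
    · have h2 : ¬ ((i:ℕ) + n < n) := by omega
      have hg : (⟨if (i:ℕ) < n then (i:ℕ) + n else (i:ℕ) - n, by split <;> omega⟩ : Fin (2*n))
          = ⟨(i:ℕ) + n, by omega⟩ := Fin.ext (by simp [h])
      rw [hg]
      simp only [stdJ]
      rw [dif_pos h, dif_neg h2]
      have e : (⟨(i:ℕ) + n - n, by omega⟩ : Fin (2*n)) = i := Fin.ext (by simp)
      rw [e]; ring
    · have h1 : ¬ ((i:ℕ) < n) := by omega
      have h3 : (i:ℕ) - n < n := by omega
      have hg : (⟨if (i:ℕ) < n then (i:ℕ) + n else (i:ℕ) - n, by split <;> omega⟩ : Fin (2*n))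
          = ⟨(i:ℕ) - n, by omega⟩ := Fin.ext (by simp [h1])
      rw [hg]
      simp only [stdJ]
      rw [dif_neg h1, dif_pos h3]
      have e : (⟨(i:ℕ) - n + n, by omega⟩ : Fin (2*n)) = i := Fin.ext (by simp; omega)
      rw [e]; ring
  · intro i _
    rcases lt_or_ge (i:ℕ) n with h | h
    · simp only [if_pos h, ne_eq, Fin.ext_iff]; simp only [not_lt] at *; omega
    · simp only [if_neg (by omega : ¬ ((i:ℕ) < n)), ne_eq, Fin.ext_iff]; omega
  · intro i; exact Finset.mem_univ _
  · intro i
    apply Fin.ext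
    rcases lt_or_ge (i:ℕ) n with h | h
    · simp only [if_pos h]
      have h2 : ¬ ((i:ℕ) + n < n) := by omega
      simp only [if_neg h2]; omega
    · have h1 : ¬ ((i:ℕ) < n) := by omega
      have h3 : (i:ℕ) - n < n := by omega
      simp only [if_neg h1, if_pos h3]; omega

lemma sum_filter_lt_castAdd {p q : ℕ} {M : Type*} [AddCommMonoid M] (i : Fin p)
    (f : Fin (p+q) → M) :
    ∑ j ∈ Finset.univ.filter (fun j => j < Fin.castAdd q i), f j
      = ∑ j ∈ Finset.univ.filter (fun j : Fin p => j < i), f (Fin.castAdd q j) := by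
  have hset : Finset.univ.filter (fun j : Fin (p+q) => j < Fin.castAdd q i)
      = (Finset.univ.filter (fun j : Fin p => j < i)).image (Fin.castAdd q) := by
    ext j
    simp only [Finset.mem_image, Finset.mem_filter, Finset.mem_univ, true_and, Fin.lt_def,
      Fin.coe_castAdd]
    constructor
    · intro h
      exact ⟨⟨(j:ℕ), by omega⟩, h, Fin.ext rfl⟩
    · rintro ⟨a, ha, rfl⟩
      simpa using ha
  rw [hset, Finset.sum_image (fun x _ y _ h => by simpa [Fin.ext_iff] using h)]

lemma sum_filter_lt_natAdd {p q : ℕ} {M : Type*} [AddCommMonoid M] (i : Fin q)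
    (f : Fin (p+q) → M) :
    ∑ j ∈ Finset.univ.filter (fun j => j < Fin.natAdd p i), f j
      = (∑ j : Fin p, f (Fin.castAdd q j))
        + ∑ j ∈ Finset.univ.filter (fun j : Fin q => j < i), f (Fin.natAdd p j) := by
  have hset : Finset.univ.filter (fun j : Fin (p+q) => j < Fin.natAdd p i)
      = (Finset.univ.image (Fin.castAdd q))
        ∪ ((Finset.univ.filter (fun j : Fin q => j < i)).image (Fin.natAdd p)) := by
    ext j
    simp only [Finset.mem_filter, Finset.mem_univ, true_and, Finset.mem_union, Finset.mem_image,
      Fin.lt_def, Fin.coe_natAdd]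
    constructor
    · intro h
      rcases lt_or_ge (j:ℕ) p with hj | hj
      · exact Or.inl ⟨⟨(j:ℕ), hj⟩, Fin.ext rfl⟩
      · exact Or.inr ⟨⟨(j:ℕ) - p, by omega⟩, show (j:ℕ) - p < (i:ℕ) by omega, Fin.ext (show p + ((j:ℕ) - p) = (j:ℕ) by omega)⟩
    · rintro (⟨a, rfl⟩ | ⟨a, ha, rfl⟩)
      · simp; omega
      · simp; omega
  have hdisj : Disjoint (Finset.univ.image (Fin.castAdd q) : Finset (Fin (p+q)))
      ((Finset.univ.filter (fun j : Fin q => j < i)).image (Fin.natAdd p)) := by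
    simp only [Finset.disjoint_left, Finset.mem_image, Finset.mem_filter, Finset.mem_univ,
      true_and]
    rintro a ⟨x, rfl⟩ ⟨y, _, hy⟩
    have := congrArg Fin.val hy
    simp only [Fin.coe_natAdd, Fin.coe_castAdd] at this
    omega
  rw [hset, Finset.sum_union hdisj,
    Finset.sum_image (fun x _ y _ h => by simpa [Fin.ext_iff] using h),
    Finset.sum_image (fun x _ y _ h => by simpa [Fin.ext_iff] using h)]

lemma sum_filter_lt_castSucc {p : ℕ} {M : Type*} [AddCommMonoid M] (i : Fin p)
    (f : Fin (p+1) → M) :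
    ∑ j ∈ Finset.univ.filter (fun j => j < Fin.castSucc i), f j
      = ∑ j ∈ Finset.univ.filter (fun j : Fin p => j < i), f j.castSucc := by
  have hset : Finset.univ.filter (fun j : Fin (p+1) => j < Fin.castSucc i)
      = (Finset.univ.filter (fun j : Fin p => j < i)).image Fin.castSucc := by
    ext j
    simp only [Finset.mem_image, Finset.mem_filter, Finset.mem_univ, true_and, Fin.lt_def,
      Fin.coe_castSucc]
    constructor
    · intro h
      exact ⟨⟨(j:ℕ), by omega⟩, h, Fin.ext rfl⟩
    · rintro ⟨a, ha, rfl⟩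
      simpa using ha
  rw [hset, Finset.sum_image (fun x _ y _ h => by simpa [Fin.ext_iff] using h)]

lemma sum_filter_lt_last {p : ℕ} {M : Type*} [AddCommMonoid M] (f : Fin (p+1) → M) :
    ∑ j ∈ Finset.univ.filter (fun j => j < Fin.last p), f j = ∑ j : Fin p, f j.castSucc := by
  have hset : Finset.univ.filter (fun j : Fin (p+1) => j < Fin.last p)
      = Finset.univ.image Fin.castSucc := by
    ext j
    simp only [Finset.mem_filter, Finset.mem_univ, true_and, Finset.mem_image, Fin.lt_def,
      Fin.val_last]
    constructor
    · intro h; exact ⟨⟨(j:ℕ), h⟩, Fin.ext rfl⟩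
    · rintro ⟨a, rfl⟩; simpa using a.isLt
  rw [hset, Finset.sum_image (fun x _ y _ h => by simpa [Fin.ext_iff] using h)]

lemma sum_filter_lt_succ {q : ℕ} {M : Type*} [AddCommMonoid M] (i : Fin q)
    (f : Fin (q+1) → M) :
    ∑ j ∈ Finset.univ.filter (fun j => j < Fin.succ i), f j
      = f 0 + ∑ j ∈ Finset.univ.filter (fun j : Fin q => j < i), f j.succ := by
  have hset : Finset.univ.filter (fun j : Fin (q+1) => j < Fin.succ i)
      = insert (0 : Fin (q+1)) ((Finset.univ.filter (fun j : Fin q => j < i)).image Fin.succ) := by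
    ext j
    simp only [Finset.mem_filter, Finset.mem_univ, true_and, Finset.mem_insert, Finset.mem_image,
      Fin.lt_def, Fin.val_succ]
    constructor
    · intro h
      rcases Nat.eq_zero_or_pos (j:ℕ) with hj | hj
      · exact Or.inl (Fin.ext (by simpa using hj))
      · exact Or.inr ⟨⟨(j:ℕ) - 1, by omega⟩, show (j:ℕ) - 1 < (i:ℕ) by omega, Fin.ext (show ((j:ℕ) - 1) + 1 = (j:ℕ) by omega)⟩
    · rintro (rfl | ⟨a, ha, rfl⟩)
      · simp
      · simp; omega
  have h0 : (0 : Fin (q+1)) ∉ (Finset.univ.filter (fun j : Fin q => j < i)).image Fin.succ := by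
    simp [Fin.succ_ne_zero, eq_comm]
  rw [hset, Finset.sum_insert h0,
    Finset.sum_image (fun x _ y _ h => by simpa [Fin.ext_iff] using h)]

/-- The gluing construction in the proof of subadditivity: two admissible sequences, each using
the cutting-hyperplane normal `nn` exactly at the designated position (last for the first
sequence, first for the second), are spliced into a sequence satisfying the admissibility
constraints `∑ δ_i u_i = 0` and `∑_{j<i} δ_i δ_j ω(u_i,u_j) = 1`. -/
theorem stmt14 (n p q : ℕ)
    (w : Fin (p+1) → EuclideanSpace ℝ (Fin (2*n))) (α : Fin (p+1) → ℝ)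
    (nv : Fin (q+1) → EuclideanSpace ℝ (Fin (2*n))) (β : Fin (q+1) → ℝ)
    (hα : ∀ i, 0 ≤ α i) (hβ : ∀ i, 0 ≤ β i)
    (hw0 : ∑ i, α i • w i = 0) (hn0 : ∑ i, β i • nv i = 0)
    (hwQ : ∑ i : Fin (p+1), ∑ j ∈ Finset.univ.filter (fun j => j < i),
      α i * α j * omegaF (w i) (w j) = 1)
    (hnQ : ∑ i : Fin (q+1), ∑ j ∈ Finset.univ.filter (fun j => j < i),
      β i * β j * omegaF (nv i) (nv j) = 1)
    (nn : EuclideanSpace ℝ (Fin (2*n))) (hnn : ‖nn‖ = 1)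
    (hwlast : w (Fin.last p) = nn) (hnfirst : nv 0 = -nn)
    (hαpos : 0 < α (Fin.last p)) (hβpos : 0 < β 0)
    (c : ℝ) (hc : c = Real.sqrt ((β 0)^2 + (α (Fin.last p))^2))
    (u : Fin (p + q) → EuclideanSpace ℝ (Fin (2*n))) (δ : Fin (p + q) → ℝ)
    (hu₁ : ∀ i : Fin p, u (Fin.castAdd q i) = w i.castSucc)
    (hu₂ : ∀ i : Fin q, u (Fin.natAdd p i) = nv i.succ)
    (hδ₁ : ∀ i : Fin p, δ (Fin.castAdd q i) = (β 0 / c) * α i.castSucc)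
    (hδ₂ : ∀ i : Fin q, δ (Fin.natAdd p i) = (α (Fin.last p) / c) * β i.succ) :
    ∑ i, δ i • u i = 0 ∧
    ∑ i : Fin (p + q), ∑ j ∈ Finset.univ.filter (fun j => j < i),
      δ i * δ j * omegaF (u i) (u j) = 1 := by
  have hcpos : 0 < c := by
    rw [hc]; exact Real.sqrt_pos.mpr (by positivity)
  have hcne : c ≠ 0 := ne_of_gt hcpos
  have hc2 : c^2 = (β 0)^2 + (α (Fin.last p))^2 := by
    rw [hc]; exact Real.sq_sqrt (by positivity)
  have hWsum : ∑ i : Fin p, α i.castSucc • w i.castSucc = -(α (Fin.last p) • nn) := by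
    have h := hw0
    rw [Fin.sum_univ_castSucc, hwlast, add_eq_zero_iff_eq_neg] at h
    exact h
  have hNsum : ∑ i : Fin q, β i.succ • nv i.succ = β 0 • nn := by
    have h := hn0
    rw [Fin.sum_univ_succ, hnfirst, add_comm, add_eq_zero_iff_eq_neg] at h
    simpa [smul_neg] using h
  constructor
  · rw [Fin.sum_univ_add]
    have e1 : ∀ i : Fin p, δ (Fin.castAdd q i) • u (Fin.castAdd q i)
        = (β 0 / c) • (α i.castSucc • w i.castSucc) := by
      intro i; rw [hδ₁, hu₁, mul_smul]
    have e2 : ∀ i : Fin q, δ (Fin.natAdd p i) • u (Fin.natAdd p i)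
        = (α (Fin.last p) / c) • (β i.succ • nv i.succ) := by
      intro i; rw [hδ₂, hu₂, mul_smul]
    rw [Finset.sum_congr rfl (fun i _ => e1 i), Finset.sum_congr rfl (fun i _ => e2 i),
      ← Finset.smul_sum, ← Finset.smul_sum, hWsum, hNsum, smul_neg, smul_smul, smul_smul,
      ← neg_smul, ← add_smul]
    have : -(β 0 / c * α (Fin.last p)) + α (Fin.last p) / c * β 0 = 0 := by ring
    rw [this, zero_smul]
  · rw [Fin.sum_univ_add]
    have block1 : ∑ i : Fin p, ∑ j ∈ Finset.univ.filter (fun j => j < Fin.castAdd q i),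
        δ (Fin.castAdd q i) * δ j * omegaF (u (Fin.castAdd q i)) (u j)
        = (β 0 / c)^2 * ∑ i : Fin p, ∑ j ∈ Finset.univ.filter (fun j : Fin p => j < i),
            α i.castSucc * α j.castSucc * omegaF (w i.castSucc) (w j.castSucc) := by
      rw [Finset.mul_sum]
      refine Finset.sum_congr rfl (fun i _ => ?_)
      rw [sum_filter_lt_castAdd, Finset.mul_sum]
      refine Finset.sum_congr rfl (fun j _ => ?_)
      rw [hδ₁, hδ₁, hu₁, hu₁]; ring
    have block2 : ∑ i : Fin q, ∑ j ∈ Finset.univ.filter (fun j => j < Fin.natAdd p i),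
        δ (Fin.natAdd p i) * δ j * omegaF (u (Fin.natAdd p i)) (u j)
        = (α (Fin.last p) / c) * (β 0 / c) *
            (∑ i : Fin q, ∑ j : Fin p, β i.succ * α j.castSucc * omegaF (nv i.succ) (w j.castSucc))
          + (α (Fin.last p) / c)^2 *
            ∑ i : Fin q, ∑ j ∈ Finset.univ.filter (fun j : Fin q => j < i),
              β i.succ * β j.succ * omegaF (nv i.succ) (nv j.succ) := by
      rw [Finset.mul_sum, Finset.mul_sum, ← Finset.sum_add_distrib]
      refine Finset.sum_congr rfl (fun i _ => ?_)
      rw [sum_filter_lt_natAdd, Finset.mul_sum, Finset.mul_sum]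
      congr 1
      · refine Finset.sum_congr rfl (fun j _ => ?_)
        rw [hδ₂, hδ₁, hu₂, hu₁]; ring
      · refine Finset.sum_congr rfl (fun j _ => ?_)
        rw [hδ₂, hδ₂, hu₂, hu₂]; ring
    have hQ1 : ∑ i : Fin p, ∑ j ∈ Finset.univ.filter (fun j : Fin p => j < i),
        α i.castSucc * α j.castSucc * omegaF (w i.castSucc) (w j.castSucc) = 1 := by
      have h := hwQ
      rw [Fin.sum_univ_castSucc] at h
      have hlast : ∑ j ∈ Finset.univ.filter (fun j => j < Fin.last p),
          α (Fin.last p) * α j * omegaF (w (Fin.last p)) (w j) = 0 := by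
        rw [sum_filter_lt_last]
        have e : ∀ j : Fin p, α (Fin.last p) * α j.castSucc * omegaF (w (Fin.last p)) (w j.castSucc)
            = α (Fin.last p) * omegaF nn (α j.castSucc • w j.castSucc) := by
          intro j; rw [omegaF_smul_right, hwlast]; ring
        rw [Finset.sum_congr rfl (fun j _ => e j), ← Finset.mul_sum, ← omegaF_sum_right, hWsum,
          omegaF_neg_right, omegaF_smul_right, omegaF_self]
        ring
      have hmain : ∀ i : Fin p, ∑ j ∈ Finset.univ.filter (fun j => j < Fin.castSucc i),
          α i.castSucc * α j * omegaF (w i.castSucc) (w j)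
          = ∑ j ∈ Finset.univ.filter (fun j : Fin p => j < i),
            α i.castSucc * α j.castSucc * omegaF (w i.castSucc) (w j.castSucc) :=
        fun i => sum_filter_lt_castSucc i _
      rw [Finset.sum_congr rfl (fun i _ => hmain i), hlast, add_zero] at h
      exact h
    have hQ2 : ∑ i : Fin q, ∑ j ∈ Finset.univ.filter (fun j : Fin q => j < i),
        β i.succ * β j.succ * omegaF (nv i.succ) (nv j.succ) = 1 := by
      have h := hnQ
      rw [Fin.sum_univ_succ] at h
      have hempty : (Finset.univ.filter (fun j : Fin (q+1) => j < (0 : Fin (q+1)))) = ∅ := by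
        ext j; simp
      rw [hempty, Finset.sum_empty, zero_add] at h
      have hmain : ∀ i : Fin q, ∑ j ∈ Finset.univ.filter (fun j => j < Fin.succ i),
          β i.succ * β j * omegaF (nv i.succ) (nv j)
          = β i.succ * β 0 * omegaF (nv i.succ) (nv 0)
            + ∑ j ∈ Finset.univ.filter (fun j : Fin q => j < i),
              β i.succ * β j.succ * omegaF (nv i.succ) (nv j.succ) :=
        fun i => sum_filter_lt_succ i _
      rw [Finset.sum_congr rfl (fun i _ => hmain i), Finset.sum_add_distrib] at h
      have hcross : ∑ i : Fin q, β i.succ * β 0 * omegaF (nv i.succ) (nv 0) = 0 := by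
        have e : ∀ i : Fin q, β i.succ * β 0 * omegaF (nv i.succ) (nv 0)
            = β 0 * omegaF (β i.succ • nv i.succ) (nv 0) := by
          intro i; rw [omegaF_smul_left]; ring
        rw [Finset.sum_congr rfl (fun i _ => e i), ← Finset.mul_sum, ← omegaF_sum_left, hNsum,
          hnfirst, omegaF_smul_left, omegaF_neg_right, omegaF_self]
        ring
      rw [hcross, zero_add] at h
      exact h
    have hM : ∑ i : Fin q, ∑ j : Fin p,
        β i.succ * α j.castSucc * omegaF (nv i.succ) (w j.castSucc) = 0 := by
      have e : ∀ i : Fin q, ∑ j : Fin p, β i.succ * α j.castSucc * omegaF (nv i.succ) (w j.castSucc)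
          = omegaF (β i.succ • nv i.succ) (-(α (Fin.last p) • nn)) := by
        intro i
        rw [← hWsum, omegaF_sum_right]
        refine Finset.sum_congr rfl (fun j _ => ?_)
        rw [omegaF_smul_left, omegaF_smul_right]; ring
      rw [Finset.sum_congr rfl (fun i _ => e i), ← omegaF_sum_left, hNsum, omegaF_neg_right,
        omegaF_smul_left, omegaF_smul_right, omegaF_self]
      ring
    rw [block1, block2, hQ1, hQ2, hM]
    field_simp
    linarith [hc2]
end
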